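/- Let n be a positive integer and let g : ℝ → ℝ be a function that is concave on the open ray (−∞,1) and satisfies 0 ≤ g(λ) ≤ 1 for all λ < 1. Assume that the integral ∫_{−∞}^0 (1 − g(λ)^n) dλ is finite and that ∫_0^1 g(λ)^n dλ = ∫_{−∞}^0 (1 − g(λ)^n) dλ. Then for every real t > 0 one has g(−t) ≥ 1 − 1/√(n·t). -/

import Mathlib

open MeasureTheory Set

set_option maxHeartbeats 1000000

/-- Normalized analytic form of Lemma 4.12: if `g` is concave on `(−∞,1)` with values in
`[0,1]` there, the integral `∫_{−∞}^0 (1 − g^n)` is finite and equals `∫_0^1 g^n`, then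
`g(−t) ≥ 1 − 1/√(nt)` for all `t > 0`. -/
theorem normalized_tail_estimate
    (n : ℕ) (hn : 0 < n) (g : ℝ → ℝ)
    (hconc : ConcaveOn ℝ (Set.Iio 1) g)
    (hbound : ∀ lam : ℝ, lam < 1 → 0 ≤ g lam ∧ g lam ≤ 1)
    (hint : IntegrableOn (fun lam => 1 - g lam ^ n) (Set.Iio 0))
    (heq : ∫ lam in (0:ℝ)..1, g lam ^ n = ∫ lam in Set.Iio 0, (1 - g lam ^ n)) :
    ∀ t : ℝ, 0 < t → 1 - 1 / Real.sqrt ((n : ℝ) * t) ≤ g (-t) := by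
  intro t ht
  have hneg : (-t : ℝ) < 1 := by linarith
  obtain ⟨hg0, hg1⟩ := hbound (-t) hneg
  set c : ℝ := g (-t) with hc
  -- Step 1: monotonicity to the right of -t
  have hmono : ∀ x : ℝ, -t < x → x < 1 → g x ≤ c := by
    intro v huv hv1
    by_contra hcon
    push_neg at hcon
    have hgv : 0 < g v := lt_of_le_of_lt hg0 hcon
    set u : ℝ := -t with hu
    have hden : g u - g v < 0 := by linarith
    set lam : ℝ := min (u - 1) ((v * g u - u * g v) / (g u - g v) - 1) with hlamdef
    have hlam_u : lam < u := lt_of_le_of_lt (min_le_left _ _) (by linarith)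
    have hlam1 : lam < 1 := by linarith
    have hlamv : lam < v := by linarith
    have hvlam : 0 < v - lam := by linarith
    obtain ⟨hglam0, _⟩ := hbound lam hlam1
    have hkey : (v - lam) * g u < (u - lam) * g v := by
      have h2 : lam < (v * g u - u * g v) / (g u - g v) :=
        lt_of_le_of_lt (min_le_right _ _) (by linarith)
      have h3 : (v * g u - u * g v) / (g u - g v) * (g u - g v) < lam * (g u - g v) :=
        mul_lt_mul_of_neg_right h2 hden
      rw [div_mul_cancel₀ _ (ne_of_lt hden)] at h3
      nlinarith [h3]
    set a : ℝ := (v - u) / (v - lam) with hadef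
    set b : ℝ := (u - lam) / (v - lam) with hbdef
    have ha : 0 ≤ a := div_nonneg (by linarith) (le_of_lt hvlam)
    have hb : 0 ≤ b := div_nonneg (by linarith) (le_of_lt hvlam)
    have hab : a + b = 1 := by
      rw [hadef, hbdef, ← add_div, div_eq_one_iff_eq hvlam.ne']
      ring
    have hcomb : a • lam + b • v = u := by
      simp only [smul_eq_mul, hadef, hbdef]
      field_simp
      ring
    have hcc := hconc.2 (mem_Iio.mpr hlam1) (mem_Iio.mpr hv1) ha hb hab
    rw [hcomb] at hcc
    simp only [smul_eq_mul] at hcc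
    have hbv : g u < b * g v := by
      rw [hbdef, div_mul_eq_mul_div, lt_div_iff₀ hvlam]
      nlinarith [hkey]
    nlinarith [mul_nonneg ha hglam0]
  have hc0 : 0 ≤ c := hg0
  -- Step 2a: upper bound on the right integral
  have hup : ∫ lam in (0:ℝ)..1, g lam ^ n ≤ c ^ n := by
    by_cases hI : IntervalIntegrable (fun lam => g lam ^ n) volume 0 1
    · rw [intervalIntegral.integral_of_le zero_le_one]
      have hcongr : ∫ lam in Ioo (0:ℝ) 1, g lam ^ n = ∫ lam in Ioc (0:ℝ) 1, g lam ^ n :=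
        setIntegral_congr_set Ioo_ae_eq_Ioc
      rw [← hcongr]
      have hIOo : IntegrableOn (fun lam => g lam ^ n) (Ioo (0:ℝ) 1) volume :=
        hI.1.mono_set Ioo_subset_Ioc_self
      calc ∫ lam in Ioo (0:ℝ) 1, g lam ^ n
          ≤ ∫ _lam in Ioo (0:ℝ) 1, c ^ n := by
            apply setIntegral_mono_on hIOo (integrableOn_const measure_Ioo_lt_top.ne)
              measurableSet_Ioo
            intro x hx
            exact pow_le_pow_left₀ (hbound x hx.2).1 (hmono x (by linarith [hx.1]) hx.2) n
        _ = c ^ n := by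
            rw [setIntegral_const, Real.volume_real_Ioo]
            simp
    · rw [intervalIntegral.integral_undef hI]
      positivity
  -- Step 2b: lower bound on the left integral
  have hdown : t * (1 - c ^ n) ≤ ∫ lam in Set.Iio 0, (1 - g lam ^ n) := by
    have h1 : t * (1 - c ^ n) = ∫ _lam in Ioo (-t) 0, (1 - c ^ n) := by
      rw [setIntegral_const, Real.volume_real_Ioo]
      rw [max_eq_left (by linarith)]
      simp
    rw [h1]
    have hsub : Ioo (-t) (0:ℝ) ⊆ Iio 0 := fun x hx => hx.2
    calc ∫ _lam in Ioo (-t) 0, (1 - c ^ n)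
        ≤ ∫ lam in Ioo (-t) 0, (1 - g lam ^ n) := by
          apply setIntegral_mono_on (integrableOn_const measure_Ioo_lt_top.ne)
            (hint.mono_set hsub) measurableSet_Ioo
          intro x hx
          have hx1 : x < 1 := lt_trans hx.2 one_pos
          have := pow_le_pow_left₀ (hbound x hx1).1 (hmono x hx.1 hx1) n
          linarith
      _ ≤ ∫ lam in Set.Iio 0, (1 - g lam ^ n) := by
          apply setIntegral_mono_set hint
          · filter_upwards [ae_restrict_mem measurableSet_Iio] with x hx
            have hx1 : x < 1 := lt_trans hx one_pos
            obtain ⟨h0, h1'⟩ := hbound x hx1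
            have := pow_le_one₀ h0 h1' (n := n)
            simp only [Pi.zero_apply]
            linarith
          · exact HasSubset.Subset.eventuallyLE hsub
  have hmain : t * (1 - c ^ n) ≤ c ^ n := by
    calc t * (1 - c ^ n) ≤ ∫ lam in Set.Iio 0, (1 - g lam ^ n) := hdown
      _ = ∫ lam in (0:ℝ)..1, g lam ^ n := heq.symm
      _ ≤ c ^ n := hup
  -- Step 3: arithmetic
  have hnt : 0 < (n : ℝ) * t := by positivity
  set s : ℝ := Real.sqrt ((n : ℝ) * t) with hsdef
  have hs0 : 0 < s := Real.sqrt_pos.mpr hnt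
  have hss : s * s = (n : ℝ) * t := Real.mul_self_sqrt (le_of_lt hnt)
  by_cases hs1 : s ≤ 1
  · have : (1:ℝ) ≤ 1 / s := by
      rw [le_div_iff₀ hs0]; linarith
    linarith
  · push_neg at hs1
    by_contra hcon
    push_neg at hcon
    set e : ℝ := 1 / s with hedef
    have he0 : 0 < e := by positivity
    have he1 : e < 1 := by
      rw [hedef, div_lt_one hs0]; linarith
    have hclt : c ≤ 1 - e := le_of_lt hcon
    have hcn : c ^ n ≤ (1 - e) ^ n := pow_le_pow_left₀ hc0 hclt n
    have hB : (1 - e) ^ n * (1 + (n : ℝ) * e) ≤ 1 := by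
      have h1 : 1 + (n : ℝ) * e ≤ (1 + e) ^ n := one_add_mul_le_pow (by linarith) n
      have h4 : (0:ℝ) ≤ (1 - e) ^ n := pow_nonneg (by linarith) n
      have h2 : (1 - e) ^ n * (1 + (n : ℝ) * e) ≤ (1 - e) ^ n * (1 + e) ^ n :=
        mul_le_mul_of_nonneg_left h1 h4
      have h2' : (1 - e) ^ n * (1 + e) ^ n = (1 - e * e) ^ n := by
        rw [← mul_pow]; ring_nf
      have h3 : (1 - e * e : ℝ) ^ n ≤ 1 :=
        pow_le_one₀ (by nlinarith [he0, he1]) (by nlinarith [he0])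
      rw [h2'] at h2
      linarith
    -- from hmain: t ≤ c^n (1+t) ≤ (1-e)^n (1+t)
    have h5a : t ≤ c ^ n * (1 + t) := by nlinarith [hmain]
    have h5 : t ≤ (1 - e) ^ n * (1 + t) :=
      h5a.trans (mul_le_mul_of_nonneg_right hcn (by linarith))
    have hpos : (0:ℝ) ≤ 1 + (n : ℝ) * e := by positivity
    have h6a : t * (1 + (n : ℝ) * e) ≤ (1 - e) ^ n * (1 + t) * (1 + (n : ℝ) * e) :=
      mul_le_mul_of_nonneg_right h5 hpos
    have h6b : (1 - e) ^ n * (1 + (n : ℝ) * e) * (1 + t) ≤ 1 * (1 + t) :=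
      mul_le_mul_of_nonneg_right hB (by linarith)
    have h6c : (1 - e) ^ n * (1 + t) * (1 + (n : ℝ) * e)
        = (1 - e) ^ n * (1 + (n : ℝ) * e) * (1 + t) := by ring
    have h6 : t * (1 + (n : ℝ) * e) ≤ 1 + t := by
      rw [h6c] at h6a; linarith
    have h7 : t * ((n : ℝ) * e) = s := by
      rw [hedef]
      field_simp
      linarith [hss]
    have h8 : t * (1 + (n : ℝ) * e) = t + t * ((n : ℝ) * e) := by ring
    rw [h8, h7] at h6
    linarith
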